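/- For x > 0, the function F(x) = ∫_0^∞ exp(-t - x t³) dt satisfies the inhomogeneous ODE 27x³ F''(x) + 54x² F'(x) + (6x + 1) F(x) = 1. -/

import Mathlib

open MeasureTheory Real Set Filter Topology

noncomputable def G3 (n : ℕ) (x : ℝ) : ℝ :=
  ∫ t in Set.Ioi (0 : ℝ), t ^ n * Real.exp (-t - x * t ^ 3)

lemma intOn_pow_exp (n : ℕ) :
    IntegrableOn (fun t : ℝ => t ^ n * Real.exp (-t)) (Ioi 0) := by
  have h := Real.GammaIntegral_convergent (s := (n : ℝ) + 1) (by positivity)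
  refine h.congr_fun (fun t ht => ?_) measurableSet_Ioi
  rw [add_sub_cancel_right]; dsimp only; rw [Real.rpow_natCast, mul_comm]

lemma intOn_main (n : ℕ) {x : ℝ} (hx : 0 < x) :
    IntegrableOn (fun t : ℝ => t ^ n * Real.exp (-t - x * t ^ 3)) (Ioi 0) := by
  refine Integrable.mono (intOn_pow_exp n) ?_ ?_
  · exact (Continuous.aestronglyMeasurable (by continuity)).restrict
  · filter_upwards [ae_restrict_mem measurableSet_Ioi] with t ht
    have ht' : (0:ℝ) < t := ht
    rw [Real.norm_eq_abs, Real.norm_eq_abs, abs_of_nonneg (by positivity),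
      abs_of_nonneg (by positivity)]
    gcongr
    nlinarith [pow_pos ht' 3]

lemma hasDerivAt_G3 (n : ℕ) {x : ℝ} (hx : 0 < x) :
    HasDerivAt (G3 n) (-(G3 (n + 3) x)) x := by
  have hpos : ∀ y ∈ Metric.ball x (x / 2), 0 < y := by
    intro y hy
    rw [Metric.mem_ball, Real.dist_eq] at hy
    have := abs_lt.1 hy
    linarith [this.1]
  have key := hasDerivAt_integral_of_dominated_loc_of_deriv_le
    (μ := volume.restrict (Ioi (0:ℝ))) (x₀ := x)
    (F := fun y t => t ^ n * Real.exp (-t - y * t ^ 3))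
    (F' := fun y t => -(t ^ (n + 3) * Real.exp (-t - y * t ^ 3)))
    (bound := fun t => t ^ (n + 3) * Real.exp (-t))
    (Metric.ball_mem_nhds x (half_pos hx))
    (Eventually.of_forall fun y =>
      (Continuous.aestronglyMeasurable (by continuity)).restrict)
    (intOn_main n hx)
    ((Continuous.aestronglyMeasurable (by continuity)).restrict)
    ?_ (intOn_pow_exp (n + 3)) ?_
  · have h1 : (∫ t in Ioi (0:ℝ), -(t ^ (n + 3) * Real.exp (-t - x * t ^ 3)))
        = -(G3 (n + 3) x) := by
      rw [integral_neg]; rfl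
    have h2 := key.2
    rw [h1] at h2
    exact h2
  · filter_upwards [ae_restrict_mem measurableSet_Ioi] with t ht y hy
    have ht' : (0:ℝ) < t := ht
    have hy' := hpos y hy
    rw [norm_neg, Real.norm_eq_abs, abs_mul, abs_of_nonneg (by positivity),
      abs_of_nonneg (by positivity)]
    gcongr
    nlinarith [pow_pos ht' 3]
  · filter_upwards [ae_restrict_mem measurableSet_Ioi] with t ht y hy
    have h1 : HasDerivAt (fun z : ℝ => -t - z * t ^ 3) (-(t ^ 3)) y := by
      exact ((hasDerivAt_const y (-t)).sub ((hasDerivAt_id' y).mul_const (t ^ 3))).congr_deriv (by ring)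
    have h2 := (h1.exp).const_mul (t ^ n)
    refine h2.congr_deriv ?_
    rw [pow_add]; ring

lemma key_identity {x : ℝ} (hx : 0 < x) :
    27 * x ^ 3 * G3 6 x - 54 * x ^ 2 * G3 3 x + (6 * x + 1) * G3 0 x = 1 := by
  set f : ℝ → ℝ := fun t => -((9 * x ^ 2 * t ^ 4 - 3 * x * t ^ 2 - 6 * x * t + 1)
    * Real.exp (-t - x * t ^ 3)) with hf
  set f' : ℝ → ℝ := fun t => (27 * x ^ 3 * t ^ 6 - 54 * x ^ 2 * t ^ 3 + (6 * x + 1))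
    * Real.exp (-t - x * t ^ 3) with hf'
  have hderiv : ∀ t ∈ Ici (0:ℝ), HasDerivAt f (f' t) t := by
    intro t _
    have he : HasDerivAt (fun t : ℝ => Real.exp (-t - x * t ^ 3))
        (Real.exp (-t - x * t ^ 3) * (-1 - x * (3 * t ^ 2))) t := by
      exact (((hasDerivAt_id t).neg.sub ((hasDerivAt_pow 3 t).const_mul x)).exp).congr_deriv
        (by simp only [Pi.neg_apply, Pi.sub_apply, id_eq]; push_cast; ring)
    have hp : HasDerivAt (fun t : ℝ => 9 * x ^ 2 * t ^ 4 - 3 * x * t ^ 2 - 6 * x * t + 1)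
        (9 * x ^ 2 * (4 * t ^ 3) - 3 * x * (2 * t) - 6 * x) t := by
      exact ((((hasDerivAt_pow 4 t).const_mul (9 * x ^ 2)).sub
        ((hasDerivAt_pow 2 t).const_mul (3 * x))).sub
        ((hasDerivAt_id t).const_mul (6 * x))).add_const 1 |>.congr_deriv (by push_cast; ring)
    have := (hp.mul he).neg
    refine this.congr_deriv ?_
    simp only [hf']
    ring
  have hint : IntegrableOn f' (Ioi (0:ℝ)) := by
    have : f' = fun t => 27 * x ^ 3 * (t ^ 6 * Real.exp (-t - x * t ^ 3))
        - 54 * x ^ 2 * (t ^ 3 * Real.exp (-t - x * t ^ 3))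
        + (6 * x + 1) * (t ^ 0 * Real.exp (-t - x * t ^ 3)) := by
      funext t; simp only [hf']; ring
    rw [this]
    exact (((intOn_main 6 hx).const_mul _).sub ((intOn_main 3 hx).const_mul _)).add
      ((intOn_main 0 hx).const_mul _)
  have htend : Tendsto f atTop (𝓝 0) := by
    have hB : Tendsto (fun t : ℝ => 9 * x ^ 2 * (t ^ 4 * Real.exp (-t))
        + 3 * x * (t ^ 2 * Real.exp (-t))
        + 6 * x * (t ^ 1 * Real.exp (-t)) + Real.exp (-t)) atTop (𝓝 0) := by
      have h4 := (Real.tendsto_pow_mul_exp_neg_atTop_nhds_zero 4).const_mul (9 * x ^ 2)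
      have h2 := (Real.tendsto_pow_mul_exp_neg_atTop_nhds_zero 2).const_mul (3 * x)
      have h1 := (Real.tendsto_pow_mul_exp_neg_atTop_nhds_zero 1).const_mul (6 * x)
      have h0 : Tendsto (fun t : ℝ => Real.exp (-t)) atTop (𝓝 0) := by
        simpa using Real.tendsto_exp_neg_atTop_nhds_zero
      simpa using ((h4.add h2).add h1).add h0
    apply squeeze_zero_norm' ?_ hB
    · filter_upwards [eventually_ge_atTop (0:ℝ)] with t ht
      have h1 : Real.exp (-t - x * t ^ 3) ≤ Real.exp (-t) := by
        apply Real.exp_le_exp.2; nlinarith [pow_nonneg ht 3]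
      have h2 : |9 * x ^ 2 * t ^ 4 - 3 * x * t ^ 2 - 6 * x * t + 1|
          ≤ 9 * x ^ 2 * t ^ 4 + 3 * x * t ^ 2 + 6 * x * t + 1 := by
        rw [abs_le]; constructor <;> nlinarith [pow_nonneg ht 4, pow_nonneg ht 2,
          sq_nonneg x, mul_nonneg (mul_nonneg hx.le ht) ht]
      calc ‖f t‖ = |9 * x ^ 2 * t ^ 4 - 3 * x * t ^ 2 - 6 * x * t + 1|
            * Real.exp (-t - x * t ^ 3) := by
              simp [hf, abs_mul, abs_of_nonneg (Real.exp_pos _).le]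
        _ ≤ (9 * x ^ 2 * t ^ 4 + 3 * x * t ^ 2 + 6 * x * t + 1) * Real.exp (-t) := by
              apply mul_le_mul h2 h1 (Real.exp_pos _).le (by positivity)
        _ = _ := by ring
  have hI := integral_Ioi_of_hasDerivAt_of_tendsto' hderiv hint htend
  have hf0 : f 0 = -1 := by simp [hf]
  rw [hf0, sub_neg_eq_add, zero_add] at hI
  have hsplit : (∫ t in Ioi (0:ℝ), f' t)
      = 27 * x ^ 3 * G3 6 x - 54 * x ^ 2 * G3 3 x + (6 * x + 1) * G3 0 x := by
    have : f' = fun t => 27 * x ^ 3 * (t ^ 6 * Real.exp (-t - x * t ^ 3))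
        - 54 * x ^ 2 * (t ^ 3 * Real.exp (-t - x * t ^ 3))
        + (6 * x + 1) * (t ^ 0 * Real.exp (-t - x * t ^ 3)) := by
      funext t; simp only [hf']; ring
    have hA : IntegrableOn (fun t : ℝ => 27 * x ^ 3 * (t ^ 6 * Real.exp (-t - x * t ^ 3)))
        (Ioi 0) := (intOn_main 6 hx).const_mul _
    have hB : IntegrableOn (fun t : ℝ => 54 * x ^ 2 * (t ^ 3 * Real.exp (-t - x * t ^ 3)))
        (Ioi 0) := (intOn_main 3 hx).const_mul _
    have hC : IntegrableOn (fun t : ℝ => (6 * x + 1) * (t ^ 0 * Real.exp (-t - x * t ^ 3)))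
        (Ioi 0) := (intOn_main 0 hx).const_mul _
    have hAB : IntegrableOn (fun t : ℝ => 27 * x ^ 3 * (t ^ 6 * Real.exp (-t - x * t ^ 3))
        - 54 * x ^ 2 * (t ^ 3 * Real.exp (-t - x * t ^ 3))) (Ioi 0) := hA.sub hB
    rw [this, integral_add hAB hC, integral_sub hA hB,
      integral_const_mul, integral_const_mul, integral_const_mul]
    rfl
  rw [← hsplit, hI]

/-- `F(x) = ∫₀^∞ exp(-t - x t³) dt` -/
noncomputable def F3 (x : ℝ) : ℝ := ∫ t in Set.Ioi (0 : ℝ), Real.exp (-t - x * t ^ 3)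

lemma F3_eq : F3 = G3 0 := by
  funext y; unfold F3 G3; simp

/-- For `x > 0`, `F(x) = ∫₀^∞ exp(-t - x t³) dt` satisfies
`27x³ F'' + 54x² F' + (6x+1) F = 1`. -/
theorem stmt3 (x : ℝ) (hx : 0 < x) :
    27 * x ^ 3 * deriv (deriv F3) x + 54 * x ^ 2 * deriv F3 x + (6 * x + 1) * F3 x = 1 := by
  have hd1 : ∀ y : ℝ, 0 < y → deriv F3 y = -(G3 3 y) := by
    intro y hy
    rw [F3_eq]
    exact (hasDerivAt_G3 0 hy).deriv
  have hev : deriv F3 =ᶠ[𝓝 x] fun y => -(G3 3 y) := by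
    filter_upwards [isOpen_Ioi.mem_nhds hx] with y hy
    exact hd1 y hy
  have hd2 : deriv (deriv F3) x = G3 6 x := by
    rw [hev.deriv_eq]
    have := ((hasDerivAt_G3 3 hx).neg).deriv
    rw [show (fun y => -(G3 3 y)) = -G3 3 from rfl, this]; ring
  rw [hd2, hd1 x hx, F3_eq]
  have := key_identity hx
  linarith
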